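/- Let p, q be idempotents in a ring R with p − q Drazin invertible and (p+q)(1 − (p−q)(p−q)^D) nilpotent. Then p + q is Drazin invertible and (p+q)^D = (p−q)^D (p+q) (p−q)^D. -/

import Mathlib

/-- `b` is the Drazin inverse of `a`. -/
def IsDrazinInverse {R : Type*} [Ring R] (a b : R) : Prop :=
  a * b = b * a ∧ b * a * b = b ∧ IsNilpotent (a - a * a * b)


/-- An element commuting with `a` commutes with any Drazin inverse of `a`. -/
theorem commute_drazin {R : Type*} [Ring R] {a b x : R} (h1 : a * b = b * a)
    (h2 : b * a * b = b) (h3 : IsNilpotent (a - a * a * b)) (hx : x * a = a * x) :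
    x * b = b * x := by
  obtain ⟨m, hm⟩ := h3
  obtain ⟨e, hedef⟩ : ∃ e, e = a * b := ⟨a * b, rfl⟩
  have hcab : Commute a b := h1
  have hcxa : Commute x a := hx
  have heAB : (a * b) * (a * b) = a * b := by
    have : (a * b) * (a * b) = a * (b * a * b) := by simp only [mul_assoc]
    rw [this, h2]
  have he : e * e = e := by rw [hedef]; exact heAB
  have hM : (a - a * a * b) ^ (m + 1) = 0 := by rw [pow_succ, hm, zero_mul]
  have haf : a * (1 - e) = a - a * a * b := by
    rw [hedef, mul_sub, mul_one, ← mul_assoc]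
  have hfa : (1 - e) * a = a - a * a * b := by
    rw [hedef, sub_mul, one_mul, mul_assoc, ← h1, ← mul_assoc]
  have hfe : (1 - e) * (1 - e) = 1 - e := by
    simp only [mul_sub, sub_mul, one_mul, mul_one, he]; abel
  have hcf : Commute a (1 - e) := haf.trans hfa.symm
  have haMf : a ^ (m + 1) * (1 - e) = 0 := by
    have h := hcf.mul_pow (m + 1)
    rw [haf, hM, IsIdempotentElem.pow_succ_eq m hfe] at h
    exact h.symm
  have hfaM : (1 - e) * a ^ (m + 1) = 0 :=
    ((hcf.pow_left (m + 1)).eq).symm.trans haMf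
  have hE1 : a ^ (m + 1) * b ^ (m + 1) = e := by
    rw [hedef, ← hcab.mul_pow]
    exact IsIdempotentElem.pow_succ_eq m heAB
  have hE2 : b ^ (m + 1) * a ^ (m + 1) = e := by
    rw [hedef, ← hcab.symm.mul_pow, ← h1]
    exact IsIdempotentElem.pow_succ_eq m heAB
  have hxA : x * a ^ (m + 1) = a ^ (m + 1) * x := (hcxa.pow_right (m + 1)).eq
  have hexf : e * (x * (1 - e)) = 0 := by
    calc e * (x * (1 - e)) = (b^(m+1) * a^(m+1)) * (x * (1 - e)) := by rw [hE2]
    _ = b^(m+1) * ((a^(m+1) * x) * (1 - e)) := by simp only [mul_assoc]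
    _ = b^(m+1) * ((x * a^(m+1)) * (1 - e)) := by rw [hxA]
    _ = b^(m+1) * (x * (a^(m+1) * (1 - e))) := by simp only [mul_assoc]
    _ = 0 := by rw [haMf, mul_zero, mul_zero]
  have hfxe : (1 - e) * (x * e) = 0 := by
    calc (1 - e) * (x * e) = (1 - e) * (x * (a^(m+1) * b^(m+1))) := by rw [hE1]
    _ = ((1 - e) * (x * a^(m+1))) * b^(m+1) := by simp only [mul_assoc]
    _ = ((1 - e) * (a^(m+1) * x)) * b^(m+1) := by rw [hxA]
    _ = (((1 - e) * a^(m+1)) * x) * b^(m+1) := by simp only [mul_assoc]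
    _ = 0 := by rw [hfaM, zero_mul, zero_mul]
  have hxe : x * e = e * x := by
    have t1 : x * e = e * (x * e) := by
      have h : (1 - e) * (x * e) = x * e - e * (x * e) := by rw [sub_mul, one_mul]
      rw [h, sub_eq_zero] at hfxe
      exact hfxe
    have t2 : e * x = e * (x * e) := by
      have h : e * (x * (1 - e)) = e * x - e * (x * e) := by
        rw [mul_sub, mul_one, mul_sub]
      rw [h, sub_eq_zero] at hexf
      exact hexf
    rw [t1, t2]
  have hbe : b * e = b := by rw [hedef, ← mul_assoc, h2]
  have heb : e * b = b := by rw [hedef, h1, h2]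
  have hbae : (b * a) * e = e := by rw [← h1, hedef]; exact heAB
  calc x * b = (x * e) * b := by rw [mul_assoc, heb]
  _ = (e * x) * b := by rw [hxe]
  _ = ((b * a) * e) * (x * b) := by rw [hbae]; simp only [mul_assoc]
  _ = (b * a) * ((e * x) * b) := by simp only [mul_assoc]
  _ = (b * a) * ((x * e) * b) := by rw [hxe]
  _ = b * ((a * x) * (e * b)) := by simp only [mul_assoc]
  _ = b * ((x * a) * (e * b)) := by rw [hx]
  _ = (b * x) * (a * b) := by rw [heb]; simp only [mul_assoc]
  _ = (b * x) * e := by rw [hedef]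
  _ = b * (x * e) := by simp only [mul_assoc]
  _ = b * (e * x) := by rw [hxe]
  _ = b * x := by rw [← mul_assoc, hbe]

theorem drazin_aux {R : Type*} [Ring R] (a s d : R)
    (hss : s * s = s + s - a * a)
    (has : a * s = a + a - s * a)
    (ha2s : s * (a * a) = (a * a) * s)
    (h1 : a * d = d * a) (h2 : d * a * d = d) (h3 : IsNilpotent (a - a * a * d))
    (hn : IsNilpotent (s * (1 - a * d))) :
    s * (d * s * d) = (d * s * d) * s ∧ (d * s * d) * s * (d * s * d) = d * s * d ∧
      IsNilpotent (s - s * s * (d * s * d)) := by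
  have hcad : Commute a d := h1
  have hdad2 : a * (d * d) = d := by rw [← mul_assoc, h1, h2]
  have hd2a : (d * d) * a = d := by rw [mul_assoc, ← h1, ← mul_assoc, h2]
  -- d * d is a Drazin inverse of a * a
  have hcq : Commute (a * a) d := hcad.mul_left hcad
  have c1 : (a * a) * (d * d) = (d * d) * (a * a) := (hcq.mul_right hcq).eq
  have t : (d * d) * (a * a) = d * a := by rw [← mul_assoc, hd2a]
  have c2 : (d * d) * (a * a) * (d * d) = d * d := by rw [t, ← mul_assoc, h2]
  have heq' : a * a - (a * a) * (a * a) * (d * d) = a * (a - a * a * d) := by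
    rw [mul_sub]
    congr 1
    simp only [mul_assoc]
    rw [hdad2]
  have hcan : Commute a (a - a * a * d) :=
    (Commute.refl a).sub_right (((Commute.refl a).mul_right (Commute.refl a)).mul_right hcad)
  have c3 : IsNilpotent (a * a - (a * a) * (a * a) * (d * d)) := by
    rw [heq']
    exact hcan.isNilpotent_mul_left h3
  have hsd2 : s * (d * d) = (d * d) * s := commute_drazin c1 c2 c3 ha2s
  -- key : d*s*d = d*d + d*d - s*(d*d)
  have e4 : a * (d * (d * d)) = d * d := by
    rw [← mul_assoc d d d, ← mul_assoc a, hdad2]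
  have e1 : d * s * d = a * s * (d * (d * d)) := by
    calc d * s * d = (a * (d * d)) * s * d := by rw [hdad2]
    _ = a * ((d * d) * s) * d := by simp only [mul_assoc]
    _ = a * (s * (d * d)) * d := by rw [hsd2]
    _ = a * s * (d * (d * d)) := by simp only [mul_assoc]
  have key : d * s * d = d * d + d * d - s * (d * d) := by
    calc d * s * d = a * s * (d * (d * d)) := e1
    _ = (a + a - s * a) * (d * (d * d)) := by rw [has]
    _ = a * (d * (d * d)) + a * (d * (d * d)) - s * (a * (d * (d * d))) := by
        rw [sub_mul, add_mul, mul_assoc s]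
    _ = d * d + d * d - s * (d * d) := by rw [e4]
  have hkey2 : s * (d * d) + s * (d * d) - s * (s * (d * d)) = a * d := by
    rw [← mul_assoc s s, hss, sub_mul, add_mul, mul_assoc a a, hdad2]
    abel
  have hsw : s * (d * s * d) = a * d := by
    rw [key, mul_sub, mul_add]
    exact hkey2
  have hws : (d * s * d) * s = a * d := by
    rw [key, sub_mul, add_mul, ← hsd2, mul_assoc s, ← hsd2]
    exact hkey2
  have hdde : (d * d) * (a * d) = d * d := by
    rw [← mul_assoc, hd2a]
  have hwAD : (d * s * d) * (a * d) = d * s * d := by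
    rw [key, sub_mul, add_mul, mul_assoc s, hdde]
  refine ⟨hsw.trans hws.symm, ?_, ?_⟩
  · rw [mul_assoc (d * s * d) s (d * s * d), hsw, hwAD]
  · have h : s - s * s * (d * s * d) = s * (1 - a * d) := by
      rw [mul_assoc s s (d * s * d), hsw, mul_sub, mul_one]
    rw [h]
    exact hn

theorem stmt16 {R : Type*} [Ring R] (p q d : R) (hp : p * p = p) (hq : q * q = q)
    (hd : IsDrazinInverse (p - q) d)
    (hn : IsNilpotent ((p + q) * (1 - (p - q) * d))) :
    IsDrazinInverse (p + q) (d * (p + q) * d) := by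
  obtain ⟨h1, h2, h3⟩ := hd
  have hss : (p+q) * (p+q) = (p+q) + (p+q) - (p-q) * (p-q) := by
    linear_combination (norm := noncomm_ring) 2*hp + 2*hq
  have has : (p-q) * (p+q) = (p-q) + (p-q) - (p+q) * (p-q) := by
    linear_combination (norm := noncomm_ring) 2*hp - 2*hq
  have ha2s : (p+q) * ((p-q) * (p-q)) = ((p-q) * (p-q)) * (p+q) := by
    linear_combination (norm := noncomm_ring) 2*(q*hp) - 2*(hp*q) + 2*(p*hq) - 2*(hq*p)
  obtain ⟨g1, g2, g3⟩ := drazin_aux (p-q) (p+q) d hss has ha2s h1 h2 h3 hn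
  exact ⟨g1, g2, g3⟩
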